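/- Let ℓ,k ∈ ℤ with ℓ > 0 and ℓ dividing k−1. Then for every finite coloring ℕ = C_1 ∪ … ∪ C_r of the positive integers and every L ∈ ℕ there exist a color C_i and positive integers a, b such that the elements a, b, and (1/ℓ)·((ℓa+k)(ℓb+k)^j − k) for j = 1,…,L all belong to C_i, and these L+2 elements are pairwise distinct. -/

import Mathlib

open Combinatorics in

theorem vdw_fin (M r : ℕ) : ∃ N : ℕ, ∀ χ : ℕ → Fin r,
    ∃ a d : ℕ, 0 < a ∧ 0 < d ∧ a + (M+1) * d ≤ N ∧ ∀ i ≤ M + 1, χ (a + i * d) = χ a := by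
  obtain ⟨ι, _inst, hι⟩ := Line.exists_mono_in_high_dimension (Fin (M + 2)) (Fin r)
  classical
  refine ⟨1 + Fintype.card ι * (M + 1), fun χ => ?_⟩
  obtain ⟨l, c, hl⟩ := hι fun v => χ (1 + ∑ i, (v i : ℕ))
  set s : Finset ι := Finset.univ.filter (fun i => l.idxFun i = none) with hs
  set B : ℕ := ∑ i ∈ sᶜ, ((l.idxFun i).map (fun (m : Fin (M+2)) => (m : ℕ))).getD 0 with hB
  have key : ∀ x : Fin (M + 2), (∑ i, ((l x i : Fin (M+2)) : ℕ)) = B + (x : ℕ) * s.card := by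
    intro x
    rw [← Finset.sum_add_sum_compl s, add_comm]
    congr 1
    · apply Finset.sum_congr rfl
      intro i hi
      rw [hs, Finset.compl_filter, Finset.mem_filter] at hi
      obtain ⟨y, hy⟩ := Option.ne_none_iff_exists.mp hi.right
      simp_rw [← hy, Option.map_some, Option.getD, Line.apply_some hy.symm]
    · rw [Finset.sum_congr rfl (fun i hi => ?_), Finset.sum_const, smul_eq_mul, mul_comm]
      rw [hs, Finset.mem_filter] at hi
      rw [l.apply_none _ _ hi.right]
  have hd : 0 < s.card := Finset.card_pos.mpr ⟨l.proper.choose, by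
    rw [hs, Finset.mem_filter]; exact ⟨Finset.mem_univ _, l.proper.choose_spec⟩⟩
  have hcard : s.card ≤ Fintype.card ι := Finset.card_le_univ s
  refine ⟨1 + B, s.card, by omega, hd, ?_, ?_⟩
  · have h2 := key ⟨M + 1, by omega⟩
    have hbound : (∑ i, ((l ⟨M+1, by omega⟩ i : Fin (M+2)) : ℕ)) ≤ Fintype.card ι * (M + 1) := by
      calc (∑ i, ((l ⟨M+1, by omega⟩ i : Fin (M+2)) : ℕ)) ≤ ∑ _i : ι, (M+1) :=
            Finset.sum_le_sum fun i _ => by omega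
        _ = Fintype.card ι * (M+1) := by
            rw [Finset.sum_const, smul_eq_mul, Finset.card_univ]
    rw [h2] at hbound
    simp only [Fin.val_mk] at hbound
    have : M + 1 ≤ (M+1) * s.card := Nat.le_mul_of_pos_right _ hd
    nlinarith
  · intro i hi
    have hilt : i < M + 2 := by omega
    have h0 := hl ⟨0, Nat.succ_pos _⟩
    have h1 := hl ⟨i, hilt⟩
    dsimp only at h0 h1
    rw [key ⟨0, Nat.succ_pos _⟩] at h0
    rw [key ⟨i, hilt⟩] at h1
    simp only [Fin.val_mk] at h0 h1
    rw [show 1 + B + i * s.card = 1 + (B + i * s.card) by ring, h1,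
      show 1 + B = 1 + (B + (0:ℕ) * s.card) by ring, h0]

theorem brauer_fin (L : ℕ) : ∀ r : ℕ, ∃ N : ℕ, ∀ χ : ℕ → Fin r,
    ∃ a d : ℕ, 0 < a ∧ 0 < d ∧ a + L * d ≤ N ∧ d ≤ N ∧ χ d = χ a ∧
      ∀ j ≤ L, χ (a + j * d) = χ a := by
  intro r
  induction r with
  | zero => exact ⟨1, fun χ => (χ 1).elim0⟩
  | succ r ih =>
    obtain ⟨N₁, h₁⟩ := ih
    set M₁ : ℕ := N₁ + 1 with hM₁
    obtain ⟨N₂, h₂⟩ := vdw_fin (L * M₁) (r + 1)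
    refine ⟨M₁ * N₂ + N₂, fun χ => ?_⟩
    obtain ⟨a, d, ha, hd, hbnd, hAP⟩ := h₂ χ
    have hdN₂ : d ≤ N₂ := by
      have : d ≤ (L * M₁ + 1) * d := Nat.le_mul_of_pos_left d (by omega)
      omega
    by_cases hcase : ∃ t, 1 ≤ t ∧ t ≤ M₁ ∧ χ (t * d) = χ a
    · obtain ⟨t, ht1, ht2, htc⟩ := hcase
      refine ⟨a, t * d, ha, by positivity, ?_, ?_, htc, fun j hj => ?_⟩
      · have : a + L * (t * d) ≤ a + (L * M₁) * d := by
          have : L * (t * d) ≤ (L * M₁) * d := by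
            rw [← mul_assoc]; exact Nat.mul_le_mul_right d (Nat.mul_le_mul_left L ht2)
          omega
        have : a + (L * M₁) * d ≤ a + (L * M₁ + 1) * d := by nlinarith
        omega
      · calc t * d ≤ M₁ * N₂ := Nat.mul_le_mul ht2 hdN₂
          _ ≤ M₁ * N₂ + N₂ := by omega
      · rw [show a + j * (t * d) = a + (j * t) * d by ring]
        exact hAP (j * t) (by nlinarith)
    · push_neg at hcase
      rcases Nat.eq_zero_or_pos r with hr | hr
      · exfalso
        subst hr
        have h1 := (χ (1 * d)).2
        have h2 := (χ a).2
        exact hcase 1 le_rfl (by omega) (Fin.ext (by omega))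
      · set c : Fin (r + 1) := χ a with hc
        set u : Fin (r + 1) → Fin r := fun x =>
          ⟨if x.1 < c.1 then x.1 else x.1 - 1, by
            have := x.2; have := c.2; split_ifs <;> omega⟩ with hu
        have u_inj : ∀ x y : Fin (r + 1), x ≠ c → y ≠ c → u x = u y → x = y := by
          intro x y hx hy hxy
          have hx' : x.1 ≠ c.1 := fun h => hx (Fin.ext h)
          have hy' : y.1 ≠ c.1 := fun h => hy (Fin.ext h)
          have hx2 := x.2; have hy2 := y.2; have hc2 := c.2
          simp only [hu, Fin.mk.injEq] at hxy
          have hx2 : x.1 < r + 1 := x.2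
          have hy2 : y.1 < r + 1 := y.2
          apply Fin.ext
          split_ifs at hxy <;> omega
        obtain ⟨a', d', ha', hd', hbnd', hd'N₁, hcol', hAP'⟩ := h₁ (fun t => u (χ (t * d)))
        have key : ∀ t, 1 ≤ t → t ≤ M₁ → u (χ (t * d)) = u (χ (a' * d)) → χ (t * d) = χ (a' * d) := by
          intro t h1t h2t h
          exact u_inj _ _ (hcase t h1t h2t) (hcase a' ha' (by omega)) h
        have hAq : ∀ j ≤ L, χ ((a' + j * d') * d) = χ (a' * d) := by
          intro j hj
          have hjd : j * d' ≤ L * d' := Nat.mul_le_mul_right d' hj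
          apply key _ (by omega) (by omega)
          have := hAP' j hj
          simpa using this
        refine ⟨a' * d, d' * d, by positivity, by positivity, ?_, ?_, ?_, fun j hj => ?_⟩
        · have : a' * d + L * (d' * d) = (a' + L * d') * d := by ring
          rw [this]
          calc (a' + L * d') * d ≤ N₁ * d := Nat.mul_le_mul_right d hbnd'
            _ ≤ M₁ * N₂ := Nat.mul_le_mul (by omega) hdN₂
            _ ≤ M₁ * N₂ + N₂ := by omega
        · calc d' * d ≤ N₁ * N₂ := Nat.mul_le_mul hd'N₁ hdN₂
            _ ≤ M₁ * N₂ + N₂ := by nlinarith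
        · exact key d' hd' (by omega) hcol'
        · rw [show a' * d + j * (d' * d) = (a' + j * d') * d by ring]
          exact hAq j hj

/-- Brauer-type theorem for ⋆_{ℓ,k} on the positive integers. Let ℓ,k ∈ ℤ
with ℓ > 0 and ℓ ∣ k−1. For every finite coloring of the positive integers and every
L ≥ 1 there are a color C i and positive integers a, b such that a, b, and
(1/ℓ)·((ℓa+k)(ℓb+k)^j − k) for j = 1,…,L all lie in C i, and these L+2 elements are
pairwise distinct. -/
theorem brauer_type_nat (l k : ℤ) (hl : 0 < l) (hdvd : l ∣ (k - 1)) (r : ℕ)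
    (C : Fin r → Set ℤ) (hC : (⋃ i, C i) = {z : ℤ | 0 < z}) (L : ℕ) (hL : 0 < L) :
    ∃ (i : Fin r) (a b : ℤ), 0 < a ∧ 0 < b ∧
      a ∈ C i ∧ b ∈ C i ∧
      (∀ j : ℕ, 1 ≤ j → j ≤ L → ((l * a + k) * (l * b + k) ^ j - k) / l ∈ C i) ∧
      Function.Injective (fun j : Fin (L + 2) =>
        if (j : ℕ) = 0 then a
        else if (j : ℕ) = 1 then b
        else ((l * a + k) * (l * b + k) ^ ((j : ℕ) - 1) - k) / l) := by
  classical
  -- the base `m`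
  set m : ℤ := l * (|k| + 2) + k with hm
  have habs : -k ≤ |k| := neg_le_abs k
  have habs' : 0 ≤ |k| := abs_nonneg k
  have hm2 : 2 ≤ m := by
    have : |k| + 2 ≤ l * (|k| + 2) := le_mul_of_one_le_left (by linarith) (by linarith)
    linarith
  have hmk : k < m := by nlinarith
  have hdvd_pow : ∀ t : ℕ, 1 ≤ t → l ∣ m ^ t - k := by
    intro t ht
    induction t with
    | zero => omega
    | succ t ih =>
      rcases Nat.eq_zero_or_pos t with h0 | h0
      · subst h0; exact ⟨|k| + 2, by ring⟩
      · have h1 := ih h0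
        have h2 : l ∣ m - k := ⟨|k| + 2, by ring⟩
        have h3 : l ∣ k * k - k := by
          have : k * k - k = k * (k - 1) := by ring
          rw [this]; exact Dvd.dvd.mul_left hdvd k
        have heq : m ^ (t + 1) - k = (m ^ t - k) * m + k * (m - k) + (k * k - k) := by ring
        rw [heq]
        exact dvd_add (dvd_add (h1.mul_right m) (h2.mul_left k)) h3
  have hpow_gt : ∀ t : ℕ, 1 ≤ t → k < m ^ t := by
    intro t ht
    have : m ≤ m ^ t := le_self_pow₀ (by linarith) (by omega)
    linarith
  set A : ℕ → ℤ := fun t => (m ^ t - k) / l with hA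
  have hAmul : ∀ t : ℕ, 1 ≤ t → l * A t = m ^ t - k := fun t ht =>
    Int.mul_ediv_cancel' (hdvd_pow t ht)
  have hApos : ∀ t : ℕ, 1 ≤ t → 0 < A t := by
    intro t ht
    have h1 := hAmul t ht
    have h2 := hpow_gt t ht
    nlinarith
  -- a default color
  have h1mem : (1 : ℤ) ∈ ⋃ i, C i := by rw [hC]; exact Set.mem_setOf.mpr one_pos
  obtain ⟨i0, -⟩ := Set.mem_iUnion.mp h1mem
  -- the coloring of exponents
  set χ : ℕ → Fin r := fun t => if h : ∃ i, A t ∈ C i then h.choose else i0 with hχdef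
  have hχ : ∀ t : ℕ, 1 ≤ t → A t ∈ C (χ t) := by
    intro t ht
    have : A t ∈ ⋃ i, C i := by rw [hC]; exact Set.mem_setOf.mpr (hApos t ht)
    have hex : ∃ i, A t ∈ C i := Set.mem_iUnion.mp this
    simp only [hχdef, dif_pos hex]
    exact hex.choose_spec
  -- apply Brauer with length 2L
  obtain ⟨N, hN⟩ := brauer_fin (2 * L) r
  obtain ⟨s, d, hs, hd, -, -, hcol, hAP⟩ := hN χ
  set s' : ℕ := if s = d then s + L * d else s with hs'def
  have hs'1 : 1 ≤ s' := by rw [hs'def]; split_ifs <;> omega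
  have hs'd : s' ≠ d := by
    rw [hs'def]; split_ifs with h
    · subst h; nlinarith
    · exact h
  have hψs' : χ s' = χ s := by
    rw [hs'def]; split_ifs with h
    · exact hAP L (by omega)
    · rfl
  have hψ : ∀ j : ℕ, j ≤ L → χ (s' + j * d) = χ s := by
    intro j hj
    rw [hs'def]; split_ifs with h
    · rw [show s + L * d + j * d = s + (L + j) * d by ring]
      exact hAP (L + j) (by omega)
    · exact hAP j (by omega)
  have e1 : l * A s' + k = m ^ s' := by have := hAmul s' hs'1; linarith
  have e2 : l * A d + k = m ^ d := by have := hAmul d hd; linarith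
  refine ⟨χ s, A s', A d, hApos s' hs'1, hApos d hd, ?_, ?_, ?_, ?_⟩
  · have := hχ s' hs'1; rwa [hψs'] at this
  · have := hχ d hd; rwa [hcol] at this
  · intro j hj1 hjL
    have hprod : (l * A s' + k) * (l * A d + k) ^ j - k = m ^ (s' + j * d) - k := by
      rw [e1, e2, ← pow_mul, Nat.mul_comm d j, ← pow_add]
    rw [hprod]
    have := hχ (s' + j * d) (by omega)
    rwa [hψ j hjL] at this
  · -- injectivity
    set E : ℕ → ℕ := fun n => if n = 0 then s' else if n = 1 then d else s' + (n - 1) * d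
      with hEdef
    have hE1 : ∀ n : ℕ, 1 ≤ E n := by
      intro n
      simp only [hEdef]
      split_ifs <;> omega
    have hE0 : E 0 = s' := by simp [hEdef]
    have hE1' : E 1 = d := by simp [hEdef]
    have hE2 : ∀ n : ℕ, E (n + 2) = s' + (n + 1) * d := by
      intro n; simp [hEdef]
    have hEinj : ∀ n1 n2 : ℕ, E n1 = E n2 → n1 = n2 := by
      intro n1 n2 h
      simp only [hEdef] at h
      split_ifs at h
      all_goals try omega
      all_goals try (have hx : d ≤ (n1 - 1) * d := Nat.le_mul_of_pos_left d (by omega))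
      all_goals try (have hy : d ≤ (n2 - 1) * d := Nat.le_mul_of_pos_left d (by omega))
      all_goals try omega
      all_goals
        (have h' : (n1 - 1) * d = (n2 - 1) * d := by omega;
         have h'' := Nat.eq_of_mul_eq_mul_right hd h'; omega)
    have hfE : ∀ j : Fin (L + 2),
        (if (j : ℕ) = 0 then A s'
          else if (j : ℕ) = 1 then A d
          else ((l * A s' + k) * (l * A d + k) ^ ((j : ℕ) - 1) - k) / l) = A (E (j : ℕ)) := by
      intro j
      rcases hj : (j : ℕ) with _ | _ | n
      · simp [hE0]
      · simp [hE1']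
      · rw [if_neg (by omega), if_neg (by omega), hE2,
          show n + 1 + 1 - 1 = n + 1 by omega,
          e1, e2, ← pow_mul, Nat.mul_comm d (n + 1), ← pow_add]
    intro j1 j2 hh
    have h12 : A (E (j1 : ℕ)) = A (E (j2 : ℕ)) := by
      rw [← hfE j1, ← hfE j2]; exact hh
    have hq1 := hAmul (E (j1 : ℕ)) (hE1 _)
    have hq2 := hAmul (E (j2 : ℕ)) (hE1 _)
    have hpow : (m : ℤ) ^ (E (j1 : ℕ)) = m ^ (E (j2 : ℕ)) := by
      rw [h12] at hq1; linarith
    have hminj : Function.Injective (fun t : ℕ => m ^ t) :=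
      (pow_right_strictMono₀ (by linarith : (1 : ℤ) < m)).injective
    have hE12 : E (j1 : ℕ) = E (j2 : ℕ) := hminj hpow
    exact Fin.ext (hEinj _ _ hE12)
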